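/- For $u \in (0,1)^n$, the matrix $\Delta_n(u)$ defined by $\Delta_n(u) = \sum_{i=1}^n \left[ (E_{ii} + E_{i+1,i+1}) \left( \frac{1}{1-u_i^4} - \frac12 \right) + (E_{i,i+1} + E_{i+1,i}) \frac{-u_i^2}{1-u_i^4} \right]$ (indices modulo $n$) is positive definite. -/

import Mathlib

open Matrix

private lemma std_ct {n : ℕ} (i j : Fin n) (c : ℝ) :
    (Matrix.single i j c)ᴴ = Matrix.single j i c := by
  ext a b
  simp [Matrix.single, Matrix.conjTranspose_apply, and_comm]

private lemma quad_std {n : ℕ} (i j : Fin n) (x : Fin n → ℝ) :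
    x ⬝ᵥ ((Matrix.single i j (1:ℝ)) *ᵥ x) = x i * x j := by
  simp only [Matrix.mulVec, dotProduct, Matrix.single, Matrix.of_apply]
  rw [Finset.sum_eq_single i, Finset.sum_eq_single j] <;> simp +contextual [eq_comm]

/-- The quadratic form as a linear map in the matrix argument. -/
private def quadL {n : ℕ} (x : Fin n → ℝ) : Matrix (Fin n) (Fin n) ℝ →ₗ[ℝ] ℝ where
  toFun M := x ⬝ᵥ (M *ᵥ x)
  map_add' A B := by simp [Matrix.add_mulVec, dotProduct_add]
  map_smul' c A := by simp [Matrix.smul_mulVec, dotProduct_smul]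

/-- The cyclic tridiagonal matrix `Δₙ(u)` is positive definite for `u ∈ (0,1)ⁿ`. -/
theorem stmt_7 (n : ℕ) [NeZero n] (u : Fin n → ℝ) (hu : ∀ i, u i ∈ Set.Ioo (0 : ℝ) 1)
    (Δ : Matrix (Fin n) (Fin n) ℝ)
    (hΔ : Δ = ∑ i : Fin n,
      ((1 / (1 - u i ^ 4) - 1 / 2) •
          (Matrix.single i i (1 : ℝ) + Matrix.single (i + 1) (i + 1) 1)
        + (-(u i ^ 2) / (1 - u i ^ 4)) •
          (Matrix.single i (i + 1) (1 : ℝ) + Matrix.single (i + 1) i 1))) :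
    Δ.PosDef := by
  have h01 : ∀ i, 0 < u i ∧ u i < 1 := fun i => ⟨(hu i).1, (hu i).2⟩
  have h4 : ∀ i, 0 < 1 - u i ^ 4 := by
    intro i
    have h1 : u i ^ 4 < 1 := by
      have := pow_lt_one₀ (le_of_lt (h01 i).1) (h01 i).2 (n := 4) (by norm_num)
      linarith
    linarith
  -- coefficients
  set a : Fin n → ℝ := fun i => 1 / (1 - u i ^ 4) - 1 / 2 with ha
  set b : Fin n → ℝ := fun i => u i ^ 2 / (1 - u i ^ 4) with hb
  have hab : ∀ i, 0 < a i - b i := by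
    intro i
    have h := h4 i
    have key : a i - b i = (1 - u i ^ 2) ^ 2 / (2 * (1 - u i ^ 4)) := by
      simp only [ha, hb]
      field_simp
      ring
    have hu2 : u i ^ 2 < 1 := by
      have := pow_lt_one₀ (le_of_lt (h01 i).1) (h01 i).2 (n := 2) (by norm_num)
      linarith
    rw [key]
    exact div_pos (pow_pos (by linarith) 2) (by linarith [h4 i])
  have hbpos : ∀ i, 0 < b i := by
    intro i
    have := h4 i
    have := (h01 i).1
    exact div_pos (pow_pos (h01 i).1 2) (h4 i)
  rw [Matrix.posDef_iff_dotProduct_mulVec]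
  constructor
  · -- Hermitian
    subst hΔ
    show _ᴴ = _
    rw [Matrix.conjTranspose_sum]
    refine Finset.sum_congr rfl fun i _ => ?_
    rw [Matrix.conjTranspose_add, Matrix.conjTranspose_smul, Matrix.conjTranspose_smul,
      Matrix.conjTranspose_add, Matrix.conjTranspose_add, std_ct, std_ct, std_ct, std_ct,
      star_trivial, star_trivial, add_comm (Matrix.single (i+1) i (1:ℝ))]
  · intro x hx
    have hq : star x ⬝ᵥ (Δ *ᵥ x) =
        ∑ i : Fin n, (b i * (x i - x (i+1)) ^ 2 + (a i - b i) * (x i ^ 2 + x (i+1) ^ 2)) := by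
      have : star x ⬝ᵥ (Δ *ᵥ x) = quadL x Δ := by simp [quadL]
      rw [this, hΔ, map_sum]
      refine Finset.sum_congr rfl fun i _ => ?_
      simp only [quadL, LinearMap.coe_mk, AddHom.coe_mk, Matrix.add_mulVec,
        Matrix.smul_mulVec, dotProduct_add, dotProduct_smul]
      rw [quad_std, quad_std, quad_std, quad_std]
      simp only [smul_eq_mul, ha, hb]
      field_simp
      ring
    rw [hq]
    obtain ⟨i0, hi0⟩ : ∃ i, x i ≠ 0 := Function.ne_iff.mp hx
    apply Finset.sum_pos'
    · intro i _
      have h1 : 0 ≤ b i * (x i - x (i+1)) ^ 2 :=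
        mul_nonneg (le_of_lt (hbpos i)) (sq_nonneg _)
      have h2 : 0 ≤ (a i - b i) * (x i ^ 2 + x (i+1) ^ 2) := by
        have := hab i; positivity
      linarith
    · refine ⟨i0, Finset.mem_univ _, ?_⟩
      have h1 : 0 ≤ b i0 * (x i0 - x (i0+1)) ^ 2 :=
        mul_nonneg (le_of_lt (hbpos i0)) (sq_nonneg _)
      have h2 : 0 < (a i0 - b i0) * (x i0 ^ 2 + x (i0+1) ^ 2) := by
        have h3 := hab i0
        have h4 : 0 < x i0 ^ 2 := by
          have habs := abs_pos.mpr hi0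
          calc (0:ℝ) < |x i0| ^ 2 := pow_pos habs 2
          _ = x i0 ^ 2 := sq_abs _
        have h5 : 0 ≤ x (i0+1) ^ 2 := sq_nonneg _
        nlinarith
      linarith
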